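/- Suppose y = Ax + e where x ∈ ℝ^N is s-sparse with support S, A ∈ ℝ^{M×N} has AAᵀ invertible, γ_t denotes the preconditioned restricted isometry constant of A (the RIP constant of (AAᵀ)^{-1/2}A) and θ_t denotes the RIP constant of (AAᵀ)^{-1}A. If μ' ∈ ℝ^N is s'-sparse and T is an index set of the t ≥ s largest absolute entries of μ' + Aᵀ(AAᵀ)^{-1}(y - Aμ'), then ‖x_{T^c}‖₂ ≤ √2 (γ_{s+s'+t} ‖x - μ'‖₂ + √(1+θ_{t+s}) ‖e‖₂). -/

import Mathlib

open Matrix Finset Real MeasureTheory ProbabilityTheory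
open scoped BigOperators

noncomputable section

/-- squared Euclidean norm -/
def nsq {n : ℕ} (v : Fin n → ℝ) : ℝ := ∑ i, v i ^ 2

/-- Euclidean norm -/
def nrm {n : ℕ} (v : Fin n → ℝ) : ℝ := Real.sqrt (∑ i, v i ^ 2)

open Classical in
/-- support of a vector, as a finset -/
def suppF {n : ℕ} (x : Fin n → ℝ) : Finset (Fin n) :=
  Finset.univ.filter (fun i => x i ≠ 0)

/-- `x` is `s`-sparse -/
def Sparse {n : ℕ} (s : ℕ) (x : Fin n → ℝ) : Prop := (suppF x).card ≤ s

/-- `δ` is a restricted isometry constant of order `t` for `A`: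
`(1-δ)‖x‖² ≤ ‖Ax‖² ≤ (1+δ)‖x‖²` for all `t`-sparse `x`. -/
def IsRIP {M N : ℕ} (A : Matrix (Fin M) (Fin N) ℝ) (t : ℕ) (δ : ℝ) : Prop :=
  ∀ x : Fin N → ℝ, Sparse t x →
    (1 - δ) * nsq x ≤ nsq (A.mulVec x) ∧ nsq (A.mulVec x) ≤ (1 + δ) * nsq x

/-- restriction of a vector to an index set (zeroing entries outside it) -/
def restr {n : ℕ} (T : Finset (Fin n)) (x : Fin n → ℝ) : Fin n → ℝ :=
  fun i => if i ∈ T then x i else 0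

/-- submatrix of the columns of `A` indexed by `T` -/
def colSub {M N : ℕ} (A : Matrix (Fin M) (Fin N) ℝ) (T : Finset (Fin N)) :
    Matrix (Fin M) T ℝ :=
  fun i j => A i j.val

/-- the feedback step: `μ'_T = x_T + (A_Tᵀ A_T)⁻¹ A_Tᵀ A_{Tᶜ} x_{Tᶜ}`, `μ'_{Tᶜ} = 0`. -/
def feedback {M N : ℕ} (A : Matrix (Fin M) (Fin N) ℝ) (T : Finset (Fin N))
    (x : Fin N → ℝ) : Fin N → ℝ :=
  fun i => if h : i ∈ T then
    x i + ((((colSub A T)ᵀ * colSub A T)⁻¹ * (colSub A T)ᵀ).mulVec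
      (A.mulVec (restr Tᶜ x))) ⟨i, h⟩
  else 0

/-- `hatAbs x k` is the `k`-th largest absolute entry of `x` (1-based index). -/
def hatAbs {n : ℕ} (x : Fin n → ℝ) (k : ℕ) : ℝ :=
  if h : k - 1 < n then |x (Tuple.sort (fun i => -|x i|) ⟨k - 1, h⟩)| else 0

/-- `T` contains the indices of the `p` largest absolute entries of `x`. -/
def containsTop {n : ℕ} (x : Fin n → ℝ) (p : ℕ) (T : Finset (Fin n)) : Prop :=
  ∀ j : Fin n, (j : ℕ) < p → Tuple.sort (fun i => -|x i|) j ∈ T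

/-- The NST+HT+FB algorithm: `T k` is the set of the `s` largest absolute entries of the
feasible iterate `x^k`, `μ^k` is the thresholding-plus-feedback of `x^k` on `T k`, and
`x^{k+1} = μ^k + Aᵀ(AAᵀ)⁻¹(y - Aμ^k)` is the null space tuning step. -/
def NSTSpec {M N : ℕ} (A : Matrix (Fin M) (Fin N) ℝ) (y : Fin M → ℝ) (s : ℕ)
    (T : ℕ → Finset (Fin N)) (xs μ : ℕ → Fin N → ℝ) : Prop :=
  (∀ k, A.mulVec (xs k) = y) ∧
  (∀ k, (T k).card = s) ∧
  (∀ k, ∀ i ∈ T k, ∀ j ∉ T k, |xs k j| ≤ |xs k i|) ∧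
  (∀ k, μ k = feedback A (T k) (xs k)) ∧
  (∀ k, xs (k + 1) = μ k + (Aᵀ * (A * Aᵀ)⁻¹).mulVec (y - A.mulVec (μ k)))

/-- The adaptive AdptNST+HT+FB algorithm: identical to NST+HT+FB except that at step `k`
the index set `T k` consists of the `k` largest absolute entries of `x^k`. -/
def AdptSpec {M N : ℕ} (A : Matrix (Fin M) (Fin N) ℝ) (y : Fin M → ℝ)
    (T : ℕ → Finset (Fin N)) (xs μ : ℕ → Fin N → ℝ) : Prop :=
  (∀ k, A.mulVec (xs k) = y) ∧
  (∀ k, (T k).card = k) ∧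
  (∀ k, ∀ i ∈ T k, ∀ j ∉ T k, |xs k j| ≤ |xs k i|) ∧
  (∀ k, μ k = feedback A (T k) (xs k)) ∧
  (∀ k, xs (k + 1) = μ k + (Aᵀ * (A * Aᵀ)⁻¹).mulVec (y - A.mulVec (μ k)))


open scoped ComplexOrder in
/-- The positive semidefinite square root, as defined in Mathlib (Dec 2024), since removed. -/
def Matrix.PosSemidef.sqrt {n : Type*} [Fintype n] [DecidableEq n] {𝕜 : Type*} [RCLike 𝕜]
    {A : Matrix n n 𝕜} (hA : A.PosSemidef) : Matrix n n 𝕜 :=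
  hA.1.eigenvectorUnitary.1 * diagonal ((↑) ∘ (√·) ∘ hA.1.eigenvalues) *
    (star hA.1.eigenvectorUnitary : Matrix n n 𝕜)

section AuxLemmas

variable {n : ℕ}

lemma nsq_nonneg (v : Fin n → ℝ) : 0 ≤ nsq v :=
  Finset.sum_nonneg fun _ _ => sq_nonneg _

lemma nrm_nonneg (v : Fin n → ℝ) : 0 ≤ nrm v := Real.sqrt_nonneg _

lemma nrm_eq (v : Fin n → ℝ) : nrm v = Real.sqrt (nsq v) := rfl

lemma nrm_sq (v : Fin n → ℝ) : nrm v ^ 2 = nsq v := Real.sq_sqrt (nsq_nonneg v)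

lemma nsq_eq_dot (v : Fin n → ℝ) : nsq v = v ⬝ᵥ v := by
  simp [nsq, dotProduct, sq]

lemma nsq_eq_zero {v : Fin n → ℝ} (h : nsq v = 0) : v = 0 := by
  funext i
  have h2 := (Finset.sum_eq_zero_iff_of_nonneg
    (fun i _ => sq_nonneg (v i))).1 h i (Finset.mem_univ i)
  exact pow_eq_zero_iff two_ne_zero |>.1 h2

lemma nsq_pos {v : Fin n → ℝ} (h : v ≠ 0) : 0 < nsq v :=
  lt_of_le_of_ne (nsq_nonneg v) fun h0 => h (nsq_eq_zero h0.symm)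

lemma dot_le_nrm (v w : Fin n → ℝ) : v ⬝ᵥ w ≤ nrm v * nrm w :=
  Real.sum_mul_le_sqrt_mul_sqrt _ _ _

lemma nrm_neg (v : Fin n → ℝ) : nrm (-v) = nrm v := by simp [nrm]

lemma nsq_add_eq (a b : Fin n → ℝ) :
    nsq (a + b) = nsq a + 2 * (a ⬝ᵥ b) + nsq b := by
  unfold nsq dotProduct
  rw [Finset.mul_sum, ← Finset.sum_add_distrib, ← Finset.sum_add_distrib]
  refine Finset.sum_congr rfl fun i _ => ?_
  simp only [Pi.add_apply]; ring

lemma nrm_add_le (a b : Fin n → ℝ) : nrm (a + b) ≤ nrm a + nrm b := by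
  have h2 : nsq (a + b) ≤ (nrm a + nrm b) ^ 2 := by
    have hd := dot_le_nrm a b
    have ha := nrm_sq a
    have hb := nrm_sq b
    rw [nsq_add_eq]; nlinarith
  calc nrm (a + b) = Real.sqrt (nsq (a + b)) := rfl
    _ ≤ Real.sqrt ((nrm a + nrm b) ^ 2) := Real.sqrt_le_sqrt h2
    _ = nrm a + nrm b := Real.sqrt_sq (add_nonneg (nrm_nonneg a) (nrm_nonneg b))

lemma nrm_sub_le (a b : Fin n → ℝ) : nrm (a - b) ≤ nrm a + nrm b := by
  rw [sub_eq_add_neg]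
  exact (nrm_add_le a (-b)).trans (by rw [nrm_neg])

lemma mem_suppF {v : Fin n → ℝ} {i : Fin n} : i ∈ suppF v ↔ v i ≠ 0 := by
  simp [suppF]

lemma restr_add (T : Finset (Fin n)) (a b : Fin n → ℝ) :
    restr T (a + b) = restr T a + restr T b := by
  funext i; by_cases h : i ∈ T <;> simp [restr, h]

lemma restr_sub (T : Finset (Fin n)) (a b : Fin n → ℝ) :
    restr T (a - b) = restr T a - restr T b := by
  funext i; by_cases h : i ∈ T <;> simp [restr, h]

lemma suppF_restr (T : Finset (Fin n)) (v : Fin n → ℝ) : suppF (restr T v) ⊆ T := by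
  intro i hi
  rw [mem_suppF] at hi
  by_contra h
  exact hi (by simp [restr, h])

lemma nsq_restr (T : Finset (Fin n)) (v : Fin n → ℝ) :
    nsq (restr T v) = ∑ i ∈ T, v i ^ 2 := by
  calc nsq (restr T v) = ∑ i, (if i ∈ T then v i ^ 2 else 0) := by
        refine Finset.sum_congr rfl fun i _ => ?_
        unfold restr; split <;> simp
    _ = ∑ i ∈ T, v i ^ 2 := by rw [Finset.sum_ite_mem, Finset.univ_inter]

lemma dot_restr_self (T : Finset (Fin n)) (f : Fin n → ℝ) :
    restr T f ⬝ᵥ f = nsq (restr T f) := by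
  rw [nsq_restr]
  unfold dotProduct restr
  calc ∑ i, (if i ∈ T then f i else 0) * f i
      = ∑ i, (if i ∈ T then f i ^ 2 else 0) := by
        refine Finset.sum_congr rfl fun i _ => ?_
        split <;> simp [sq]
    _ = ∑ i ∈ T, f i ^ 2 := by rw [Finset.sum_ite_mem, Finset.univ_inter]

lemma sum_sq_compare (w : Fin n → ℝ) (S T : Finset (Fin n))
    (hcard : (S \ T).card ≤ (T \ S).card)
    (h : ∀ i ∈ T, ∀ j ∉ T, |w j| ≤ |w i|) :
    ∑ j ∈ S \ T, w j ^ 2 ≤ ∑ i ∈ T \ S, w i ^ 2 := by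
  obtain ⟨T', hsub, hcardT'⟩ := Finset.exists_subset_card_eq hcard
  have e : ↥(S \ T) ≃ ↥T' :=
    Finset.equivOfCardEq hcardT'.symm
  have step : ∀ j : ↥(S \ T), w j.1 ^ 2 ≤ w (e j).1 ^ 2 := by
    intro j
    have hj : j.1 ∉ T := (Finset.mem_sdiff.1 j.2).2
    have hi : (e j).1 ∈ T := (Finset.mem_sdiff.1 (hsub (e j).2)).1
    have habs := h _ hi _ hj
    have h1 := abs_nonneg (w j.1)
    calc w j.1 ^ 2 = |w j.1| ^ 2 := (sq_abs _).symm
      _ ≤ |w (e j).1| ^ 2 := by nlinarith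
      _ = w (e j).1 ^ 2 := sq_abs _
  calc ∑ j ∈ S \ T, w j ^ 2 = ∑ j : ↥(S \ T), w j.1 ^ 2 :=
        (Finset.sum_coe_sort (S \ T) (fun i => w i ^ 2)).symm
    _ ≤ ∑ j : ↥(S \ T), w (e j).1 ^ 2 :=
        Finset.sum_le_sum fun j _ => step j
    _ = ∑ i : ↥T', w i.1 ^ 2 := Equiv.sum_comp e (fun i => w i.1 ^ 2)
    _ = ∑ i ∈ T', w i ^ 2 := Finset.sum_coe_sort T' (fun i => w i ^ 2)
    _ ≤ ∑ i ∈ T \ S, w i ^ 2 :=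
        Finset.sum_le_sum_of_subset_of_nonneg hsub fun i _ _ => sq_nonneg _

lemma dotT {m k : ℕ} (M : Matrix (Fin m) (Fin k) ℝ) (a : Fin m → ℝ) (b : Fin k → ℝ) :
    (Mᵀ *ᵥ a) ⬝ᵥ b = a ⬝ᵥ (M *ᵥ b) := by
  rw [Matrix.mulVec_transpose, ← Matrix.dotProduct_mulVec]

end AuxLemmas

/-- thresholding lemma (Lemma `h` of the paper). -/
theorem stmt4 {M N : ℕ} (A : Matrix (Fin M) (Fin N) ℝ) (hpd : (A * Aᵀ).PosDef)
    (s s' t : ℕ) (x μ' : Fin N → ℝ) (e : Fin M → ℝ) (y : Fin M → ℝ)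
    (hy : y = A.mulVec x + e) (hx : Sparse s x) (hμ : Sparse s' μ')
    (γ θ : ℝ)
    (hγ : ∀ z : Fin N → ℝ, Sparse (s + s' + t) z →
      (1 - γ) * nsq z ≤ nsq ((hpd.inv.posSemidef.sqrt * A).mulVec z))
    (hθ : IsRIP ((A * Aᵀ)⁻¹ * A) (t + s) θ)
    (T : Finset (Fin N)) (hts : s ≤ t) (hT : T.card = t)
    (hTtop : ∀ i ∈ T, ∀ j ∉ T,
      |(μ' + (Aᵀ * (A * Aᵀ)⁻¹).mulVec (y - A.mulVec μ')) j| ≤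
      |(μ' + (Aᵀ * (A * Aᵀ)⁻¹).mulVec (y - A.mulVec μ')) i|) :
    nrm (restr Tᶜ x) ≤
      Real.sqrt 2 * (γ * nrm (x - μ') + Real.sqrt (1 + θ) * nrm e) := by
  classical
  set w : Fin N → ℝ := μ' + (Aᵀ * (A * Aᵀ)⁻¹).mulVec (y - A.mulVec μ') with hw
  set S : Finset (Fin N) := suppF x with hSdef
  set u : Fin N → ℝ := x - μ' with hu
  set R : Matrix (Fin M) (Fin M) ℝ := hpd.inv.posSemidef.sqrt with hR
  set P : Matrix (Fin N) (Fin N) ℝ := Aᵀ * ((A * Aᵀ)⁻¹ * A) with hP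
  -- matrix algebra facts
  have hdet : IsUnit (A * Aᵀ).det := isUnit_iff_ne_zero.mpr hpd.det_pos.ne'
  have hinv1 : (A * Aᵀ) * (A * Aᵀ)⁻¹ = 1 := Matrix.mul_nonsing_inv _ hdet
  have hsymm : ((A * Aᵀ)⁻¹)ᵀ = (A * Aᵀ)⁻¹ := by
    rw [Matrix.transpose_nonsing_inv, Matrix.transpose_mul, Matrix.transpose_transpose]
  have hAP : A * P = A := by
    rw [hP, ← Matrix.mul_assoc, ← Matrix.mul_assoc, hinv1, Matrix.one_mul]
  have hPP : P * P = P := by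
    conv_lhs => rw [hP]
    rw [Matrix.mul_assoc, Matrix.mul_assoc, hAP, ← hP]
  have hPt : Pᵀ = P := by
    rw [hP, Matrix.transpose_mul, Matrix.transpose_mul, hsymm,
      Matrix.transpose_transpose, Matrix.mul_assoc]
  have hRt : Rᵀ = R := by
    rw [← Matrix.conjTranspose_eq_transpose_of_trivial]
    simp [hR, Matrix.PosSemidef.sqrt, Matrix.conjTranspose_mul, Matrix.mul_assoc,
      Matrix.star_eq_conjTranspose, Matrix.transpose_mul]
  have hRR : R * R = (A * Aᵀ)⁻¹ := by
    have hPSD := hpd.inv.posSemidef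
    have hU : (star hPSD.1.eigenvectorUnitary : Matrix (Fin M) (Fin M) ℝ) *
        hPSD.1.eigenvectorUnitary = 1 := Unitary.coe_star_mul_self _
    conv_rhs => rw [hPSD.1.spectral_theorem, Unitary.conjStarAlgAut_apply]
    rw [hR, Matrix.PosSemidef.sqrt]
    rw [show ∀ (X Y Z W V : Matrix (Fin M) (Fin M) ℝ), X * Y * Z * (W * Y * V) =
      X * Y * (Z * W) * Y * V from fun X Y Z W V => by simp only [Matrix.mul_assoc], hU,
      Matrix.mul_one, Matrix.mul_assoc (hPSD.1.eigenvectorUnitary : Matrix (Fin M) (Fin M) ℝ),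
      Matrix.diagonal_mul_diagonal]
    congr 3
    funext i
    simp [Real.mul_self_sqrt (hPSD.eigenvalues_nonneg i)]
  have hBtB : (R * A)ᵀ * (R * A) = P := by
    rw [Matrix.transpose_mul, hRt, Matrix.mul_assoc, ← Matrix.mul_assoc R R A, hRR, hP]
  -- vector-level facts
  have hBv : ∀ z : Fin N → ℝ, nsq ((R * A) *ᵥ z) = z ⬝ᵥ (P *ᵥ z) := by
    intro z
    calc nsq ((R * A) *ᵥ z) = ((R * A) *ᵥ z) ⬝ᵥ ((R * A) *ᵥ z) := nsq_eq_dot _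
      _ = ((R * A)ᵀ *ᵥ ((R * A) *ᵥ z)) ⬝ᵥ z := (dotT (R * A) ((R * A) *ᵥ z) z).symm
      _ = (((R * A)ᵀ * (R * A)) *ᵥ z) ⬝ᵥ z := by rw [Matrix.mulVec_mulVec]
      _ = (P *ᵥ z) ⬝ᵥ z := by rw [hBtB]
      _ = z ⬝ᵥ (P *ᵥ z) := dotProduct_comm _ _
  have hPadj : ∀ a b : Fin N → ℝ, (P *ᵥ a) ⬝ᵥ b = a ⬝ᵥ (P *ᵥ b) := by
    intro a b
    conv_lhs => rw [← hPt]
    exact dotT P a b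
  have hortho : ∀ a b : Fin N → ℝ, (P *ᵥ a) ⬝ᵥ (b - P *ᵥ b) = 0 := by
    intro a b
    rw [hPadj, Matrix.mulVec_sub, Matrix.mulVec_mulVec, hPP, sub_self,
      dotProduct_zero]
  have hpair : ∀ a b : Fin N → ℝ,
      a ⬝ᵥ (b - P *ᵥ b) = (a - P *ᵥ a) ⬝ᵥ (b - P *ᵥ b) := by
    intro a b
    rw [sub_dotProduct, hortho, sub_zero]
  have hnsq_sub : ∀ z : Fin N → ℝ, nsq (z - P *ᵥ z) = nsq z - z ⬝ᵥ (P *ᵥ z) := by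
    intro z
    rw [nsq_eq_dot, ← hpair, dotProduct_sub, nsq_eq_dot]
  have hcontr : ∀ z : Fin N → ℝ, Sparse (s + s' + t) z →
      nsq (z - P *ᵥ z) ≤ γ * nsq z := by
    intro z hz
    have h1 := hγ z hz
    rw [hBv z] at h1
    rw [hnsq_sub]
    linarith
  -- decomposition of w - x
  have hyd : y - A.mulVec μ' = A.mulVec u + e := by
    rw [hy, hu, Matrix.mulVec_sub]; abel
  have hveq : w - x = (P *ᵥ u - u) + (Aᵀ * (A * Aᵀ)⁻¹) *ᵥ e := by
    rw [hw, hyd, Matrix.mulVec_add, Matrix.mulVec_mulVec, Matrix.mul_assoc, ← hP, hu]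
    abel
  -- index sets
  set Δ : Finset (Fin N) := (T \ S) ∪ (S \ T) with hΔ
  have hScard : S.card ≤ s := hx
  have hcardTS : (T \ S).card ≤ t := hT ▸ Finset.card_le_card Finset.sdiff_subset
  have hcardST : (S \ T).card ≤ s :=
    le_trans (Finset.card_le_card Finset.sdiff_subset) hScard
  have hΔcard : Δ.card ≤ t + s :=
    le_trans (Finset.card_union_le _ _) (by omega)
  -- sparsity facts
  have hu_sp : Sparse (s + s' + t) u := by
    have hsub : suppF u ⊆ S ∪ suppF μ' := by
      intro i hi
      rw [mem_suppF] at hi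
      rw [Finset.mem_union, hSdef, mem_suppF, mem_suppF]
      by_contra hc
      push_neg at hc
      apply hi
      rw [hu]
      simp [Pi.sub_apply, hc.1, hc.2]
    have h1 := Finset.card_le_card hsub
    have h2 := Finset.card_union_le S (suppF μ')
    have h3 : (suppF μ').card ≤ s' := hμ
    unfold Sparse
    omega
  set z1 : Fin N → ℝ := restr Δ (P *ᵥ u - u) with hz1
  set z2 : Fin N → ℝ := restr Δ ((Aᵀ * (A * Aᵀ)⁻¹) *ᵥ e) with hz2
  have hsp1 : Sparse (s + s' + t) z1 := by
    have h1 := Finset.card_le_card (suppF_restr Δ (P *ᵥ u - u))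
    unfold Sparse
    rw [hz1]
    omega
  have hsp2 : Sparse (t + s) z2 := by
    have h1 := Finset.card_le_card (suppF_restr Δ ((Aᵀ * (A * Aᵀ)⁻¹) *ᵥ e))
    unfold Sparse
    rw [hz2]
    omega
  -- bound on z1
  have hb1 : nrm z1 ≤ γ * nrm u := by
    by_cases hu0 : u = 0
    · have hz10 : z1 = 0 := by
        rw [hz1, hu0]
        funext i
        simp [restr, Matrix.mulVec_zero]
      rw [hz10, hu0]
      simp [nrm]
    · have hγ0 : 0 ≤ γ := by
        have h1 := hcontr u hu_sp
        have h2 := nsq_nonneg (u - P *ᵥ u)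
        have h3 := nsq_pos hu0
        nlinarith
      have key : nsq z1 ≤ nrm (z1 - P *ᵥ z1) * nrm (u - P *ᵥ u) := by
        have e1 : nsq z1 = z1 ⬝ᵥ (P *ᵥ u - u) := by
          rw [hz1]; exact (dot_restr_self Δ _).symm
        have e2 : z1 ⬝ᵥ (P *ᵥ u - u) = (-z1) ⬝ᵥ (u - P *ᵥ u) := by
          rw [show P *ᵥ u - u = -(u - P *ᵥ u) from (neg_sub _ _).symm,
            dotProduct_neg, neg_dotProduct]
        have e3 : (-z1 - P *ᵥ (-z1)) = -(z1 - P *ᵥ z1) := by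
          rw [Matrix.mulVec_neg]; abel
        calc nsq z1 = (-z1) ⬝ᵥ (u - P *ᵥ u) := by rw [e1, e2]
          _ = (-z1 - P *ᵥ (-z1)) ⬝ᵥ (u - P *ᵥ u) := hpair (-z1) u
          _ ≤ nrm (-z1 - P *ᵥ (-z1)) * nrm (u - P *ᵥ u) := dot_le_nrm _ _
          _ = nrm (z1 - P *ᵥ z1) * nrm (u - P *ᵥ u) := by rw [e3, nrm_neg]
      have hc1 : nsq (z1 - P *ᵥ z1) ≤ γ * nsq z1 := hcontr z1 hsp1
      have hc2 : nsq (u - P *ᵥ u) ≤ γ * nsq u := hcontr u hu_sp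
      have h1 : nrm (z1 - P *ᵥ z1) ≤ Real.sqrt γ * nrm z1 := by
        rw [nrm_eq, nrm_eq, ← Real.sqrt_mul hγ0]
        exact Real.sqrt_le_sqrt hc1
      have h2 : nrm (u - P *ᵥ u) ≤ Real.sqrt γ * nrm u := by
        rw [nrm_eq, nrm_eq, ← Real.sqrt_mul hγ0]
        exact Real.sqrt_le_sqrt hc2
      have h3 : nsq z1 ≤ (Real.sqrt γ * nrm z1) * (Real.sqrt γ * nrm u) :=
        key.trans (mul_le_mul h1 h2 (nrm_nonneg _)
          (mul_nonneg (Real.sqrt_nonneg _) (nrm_nonneg _)))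
      have hss : Real.sqrt γ * Real.sqrt γ = γ := Real.mul_self_sqrt hγ0
      have h4 : nrm z1 * nrm z1 ≤ (γ * nrm u) * nrm z1 := by
        have h5 : nrm z1 * nrm z1 = nsq z1 := by rw [← nrm_sq z1]; ring
        rw [h5]
        calc nsq z1 ≤ (Real.sqrt γ * nrm z1) * (Real.sqrt γ * nrm u) := h3
          _ = (Real.sqrt γ * Real.sqrt γ) * (nrm z1 * nrm u) := by ring
          _ = (γ * nrm u) * nrm z1 := by rw [hss]; ring
      rcases eq_or_lt_of_le (nrm_nonneg z1) with h0 | h0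
      · rw [← h0]
        exact mul_nonneg hγ0 (nrm_nonneg u)
      · exact le_of_mul_le_mul_right h4 h0
  -- bound on z2
  have hb2 : nrm z2 ≤ Real.sqrt (1 + θ) * nrm e := by
    have hDt : (Aᵀ * (A * Aᵀ)⁻¹) = ((A * Aᵀ)⁻¹ * A)ᵀ := by
      rw [Matrix.transpose_mul, hsymm]
    have e1 : nsq z2 = z2 ⬝ᵥ ((Aᵀ * (A * Aᵀ)⁻¹) *ᵥ e) := by
      rw [hz2]; exact (dot_restr_self Δ _).symm
    have e2 : z2 ⬝ᵥ ((Aᵀ * (A * Aᵀ)⁻¹) *ᵥ e) = (((A * Aᵀ)⁻¹ * A) *ᵥ z2) ⬝ᵥ e := by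
      rw [hDt, dotProduct_comm, dotT, dotProduct_comm]
    have e4 : nsq (((A * Aᵀ)⁻¹ * A) *ᵥ z2) ≤ (1 + θ) * nsq z2 := (hθ z2 hsp2).2
    have e5 : nrm (((A * Aᵀ)⁻¹ * A) *ᵥ z2) ≤ Real.sqrt (1 + θ) * nrm z2 := by
      rw [nrm_eq, nrm_eq, ← Real.sqrt_mul' _ (nsq_nonneg z2)]
      exact Real.sqrt_le_sqrt e4
    have h4 : nrm z2 * nrm z2 ≤ (Real.sqrt (1 + θ) * nrm e) * nrm z2 := by
      have h5 : nrm z2 * nrm z2 = nsq z2 := by rw [← nrm_sq z2]; ring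
      rw [h5]
      calc nsq z2 = (((A * Aᵀ)⁻¹ * A) *ᵥ z2) ⬝ᵥ e := by rw [e1, e2]
        _ ≤ nrm (((A * Aᵀ)⁻¹ * A) *ᵥ z2) * nrm e := dot_le_nrm _ _
        _ ≤ (Real.sqrt (1 + θ) * nrm z2) * nrm e :=
            mul_le_mul_of_nonneg_right e5 (nrm_nonneg e)
        _ = (Real.sqrt (1 + θ) * nrm e) * nrm z2 := by ring
    rcases eq_or_lt_of_le (nrm_nonneg z2) with h0 | h0
    · rw [← h0]
      exact mul_nonneg (Real.sqrt_nonneg _) (nrm_nonneg e)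
    · exact le_of_mul_le_mul_right h4 h0
  -- combinatorial comparison
  have hst : (S \ T).card ≤ (T \ S).card := by
    have h1 := Finset.card_sdiff_add_card_inter S T
    have h2 := Finset.card_sdiff_add_card_inter T S
    have h3 : (S ∩ T).card = (T ∩ S).card := by rw [Finset.inter_comm]
    omega
  have hsort : nsq (restr (S \ T) w) ≤ nsq (restr (T \ S) w) := by
    rw [nsq_restr, nsq_restr]
    exact sum_sq_compare w S T hst hTtop
  have hxc : restr Tᶜ x = restr (S \ T) x := by
    funext i
    by_cases hiT : i ∈ T
    · simp [restr, hiT, Finset.mem_compl]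
    · by_cases hx0 : x i = 0
      · simp [restr, hx0]
      · have hiS : i ∈ S := by rw [hSdef]; exact mem_suppF.2 hx0
        simp [restr, hiT, Finset.mem_compl, Finset.mem_sdiff, hiS]
  have hTSx : restr (T \ S) w = restr (T \ S) (w - x) := by
    funext i
    by_cases hi : i ∈ T \ S
    · have hx0 : x i = 0 := by
        by_contra h0
        exact (Finset.mem_sdiff.1 hi).2 (by rw [hSdef]; exact mem_suppF.2 h0)
      simp [restr, hi, Pi.sub_apply, hx0]
    · simp [restr, hi]
  have hsplit : restr (S \ T) x = restr (S \ T) w - restr (S \ T) (w - x) := by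
    rw [← restr_sub, sub_sub_cancel]
  have main1 : nrm (restr Tᶜ x) ≤
      nrm (restr (T \ S) (w - x)) + nrm (restr (S \ T) (w - x)) := by
    rw [hxc, hsplit]
    refine le_trans (nrm_sub_le _ _) (add_le_add ?_ le_rfl)
    rw [← hTSx, nrm_eq, nrm_eq]
    exact Real.sqrt_le_sqrt hsort
  have hdisj : Disjoint (T \ S) (S \ T) := by
    refine Finset.disjoint_left.2 fun a ha hb => ?_
    exact (Finset.mem_sdiff.1 hb).2 (Finset.mem_sdiff.1 ha).1
  have hsum : nsq (restr Δ (w - x)) =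
      nsq (restr (T \ S) (w - x)) + nsq (restr (S \ T) (w - x)) := by
    rw [nsq_restr, nsq_restr, nsq_restr, hΔ, Finset.sum_union hdisj]
  have main2 : nrm (restr (T \ S) (w - x)) + nrm (restr (S \ T) (w - x)) ≤
      Real.sqrt 2 * nrm (restr Δ (w - x)) := by
    have hp := nrm_sq (restr (T \ S) (w - x))
    have hq := nrm_sq (restr (S \ T) (w - x))
    have hpn := nrm_nonneg (restr (T \ S) (w - x))
    have hqn := nrm_nonneg (restr (S \ T) (w - x))
    have hsq : (nrm (restr (T \ S) (w - x)) + nrm (restr (S \ T) (w - x))) ^ 2 ≤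
        2 * nsq (restr Δ (w - x)) := by
      rw [hsum]
      nlinarith [sq_nonneg (nrm (restr (T \ S) (w - x)) - nrm (restr (S \ T) (w - x)))]
    calc nrm (restr (T \ S) (w - x)) + nrm (restr (S \ T) (w - x))
        = Real.sqrt ((nrm (restr (T \ S) (w - x)) + nrm (restr (S \ T) (w - x))) ^ 2) :=
          (Real.sqrt_sq (add_nonneg hpn hqn)).symm
      _ ≤ Real.sqrt (2 * nsq (restr Δ (w - x))) := Real.sqrt_le_sqrt hsq
      _ = Real.sqrt 2 * nrm (restr Δ (w - x)) := by
          rw [Real.sqrt_mul (by norm_num : (0:ℝ) ≤ 2), nrm_eq]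
  have main3 : nrm (restr Δ (w - x)) ≤ nrm z1 + nrm z2 := by
    rw [hveq, restr_add, ← hz1, ← hz2]
    exact nrm_add_le _ _
  calc nrm (restr Tᶜ x)
      ≤ nrm (restr (T \ S) (w - x)) + nrm (restr (S \ T) (w - x)) := main1
    _ ≤ Real.sqrt 2 * nrm (restr Δ (w - x)) := main2
    _ ≤ Real.sqrt 2 * (nrm z1 + nrm z2) :=
        mul_le_mul_of_nonneg_left main3 (Real.sqrt_nonneg 2)
    _ ≤ Real.sqrt 2 * (γ * nrm u + Real.sqrt (1 + θ) * nrm e) :=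
        mul_le_mul_of_nonneg_left (add_le_add hb1 hb2) (Real.sqrt_nonneg 2)
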